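/- The Lorentz transform sends (p₀, p) to ((√s)/2, (g/2)k̂) and (p₀*, p_*) to ((√s)/2, −(g/2)k̂): i.e., with Λ the boost with velocity v = (p+p_*)/(p₀+p₀*), we have p̃ + p̃_* = 0, |p̃| = |p̃_*| = g/2, and p̃₀ = p̃₀* = √s/2, where (p̃₀,p̃) = Λ(p₀,p) and (p̃₀*,p̃_*) = Λ(p₀*,p_*). -/

import Mathlib

open scoped RealInnerProductSpace

private lemma aux_scalar (p₀ p₀s A B C M N s σ ρ a a' W α α' : ℝ)
    (h1 : p₀ ^ 2 = M + A) (h2 : p₀s ^ 2 = M + B)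
    (hN : N = A + 2 * C + B)
    (hs : s = (p₀ + p₀s) ^ 2 - N)
    (hσ : σ ^ 2 = s) (hσ0 : σ ≠ 0)
    (hρ : ρ * σ = p₀ + p₀s)
    (ha : (p₀ + p₀s) * a = A + C)
    (ha' : (p₀ + p₀s) * a' = C + B)
    (hW : (p₀ + p₀s) ^ 2 * W = N) (hW0 : W ≠ 0) (hE0 : p₀ + p₀s ≠ 0)
    (hα : α * W = (ρ - 1) * a - ρ * p₀ * W)
    (hα' : α' * W = (ρ - 1) * a' - ρ * p₀s * W) :
    ρ * (p₀ - a) = σ / 2 ∧ ρ * (p₀s - a') = σ / 2 ∧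
    α + α' = -(p₀ + p₀s) ∧
    A + 2 * α * a + α ^ 2 * W = s / 4 - M := by
  have hσ2 : σ ^ 2 ≠ 0 := pow_ne_zero 2 hσ0
  have hρW : ρ ^ 2 * (1 - W) = 1 := by
    have h : σ ^ 2 * (ρ ^ 2 * (1 - W)) = σ ^ 2 * 1 := by
      linear_combination ((ρ * σ + (p₀ + p₀s)) * (1 - W)) * hρ - hσ - hs - hW
    exact mul_left_cancel₀ hσ2 h
  have he1 : ρ * (p₀ - a) = σ / 2 := by
    have h : σ * (ρ * (p₀ - a)) = σ * (σ / 2) := by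
      linear_combination (p₀ - a) * hρ - ha - hσ / 2 - hs / 2 + hN / 2 + h1 / 2 - h2 / 2
    exact mul_left_cancel₀ hσ0 h
  have he2 : ρ * (p₀s - a') = σ / 2 := by
    have h : σ * (ρ * (p₀s - a')) = σ * (σ / 2) := by
      linear_combination (p₀s - a') * hρ - ha' - hσ / 2 - hs / 2 + hN / 2 - h1 / 2 + h2 / 2
    exact mul_left_cancel₀ hσ0 h
  refine ⟨he1, he2, ?_, ?_⟩
  · have h : ((p₀ + p₀s) * W) * (α + α') = ((p₀ + p₀s) * W) * (-(p₀ + p₀s)) := by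
      linear_combination (p₀ + p₀s) * hα + (p₀ + p₀s) * hα'
        + (ρ - 1) * ha + (ρ - 1) * ha' - (ρ - 1) * hN - (ρ - 1) * hW
    exact mul_left_cancel₀ (mul_ne_zero hE0 hW0) h
  · have h : W * (A + 2 * α * a + α ^ 2 * W) = W * (s / 4 - M) := by
      linear_combination (2 * a + α * W + ((ρ - 1) * a - ρ * p₀ * W)) * hα
        + W * (ρ * (p₀ - a) + σ / 2) * he1 + (W / 4) * hσ
        - (p₀ ^ 2 * W - a ^ 2) * hρW - W * h1
    exact mul_left_cancel₀ hW0 h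

set_option maxHeartbeats 1000000 in
/-- The Lorentz boost with velocity `v = (p+p_*)/(p₀+p₀*)` sends `(p₀,p)` to
`(√s/2, (g/2)k̂)` and `(p₀*,p_*)` to `(√s/2, −(g/2)k̂)`: the transformed spatial
momenta sum to zero, have norm `g/2`, and the transformed energies equal `√s/2`. -/
theorem lorentz_transform_center_of_mass
    (d : ℕ) (m c : ℝ) (hm : 0 < m) (hc : 0 < c)
    (p pstar : EuclideanSpace ℝ (Fin d)) (hne : p ≠ pstar)
    (p₀ p₀s s g : ℝ)
    (hp₀ : p₀ = Real.sqrt ((m * c) ^ 2 + ‖p‖ ^ 2))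
    (hp₀s : p₀s = Real.sqrt ((m * c) ^ 2 + ‖pstar‖ ^ 2))
    (hs : s = (p₀ + p₀s) ^ 2 - ‖p + pstar‖ ^ 2)
    (hg : g = Real.sqrt (‖p - pstar‖ ^ 2 - (p₀ - p₀s) ^ 2))
    (v : EuclideanSpace ℝ (Fin d)) (hv : v = (p₀ + p₀s)⁻¹ • (p + pstar))
    (hvne : v ≠ 0)
    (ρ : ℝ) (hρ : ρ = (p₀ + p₀s) / Real.sqrt s)
    (Λ : Matrix (Fin 1 ⊕ Fin d) (Fin 1 ⊕ Fin d) ℝ)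
    (hΛ : Λ = Matrix.fromBlocks
      (Matrix.of fun _ _ => ρ) (Matrix.of fun _ j => -ρ * v j)
      (Matrix.of fun i _ => -ρ * v i)
      (Matrix.of fun i j =>
        (if i = j then (1 : ℝ) else 0) + (ρ - 1) * v i * v j / ‖v‖ ^ 2))
    (P Pstar : Fin 1 ⊕ Fin d → ℝ)
    (hP : P = Sum.elim (fun _ => p₀) (fun i => p i))
    (hPstar : Pstar = Sum.elim (fun _ => p₀s) (fun i => pstar i))
    (pt pst : EuclideanSpace ℝ (Fin d))
    (hpt : pt = fun j => Λ.mulVec P (Sum.inr j))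
    (hpst : pst = fun j => Λ.mulVec Pstar (Sum.inr j)) :
    pt + pst = 0 ∧ ‖pt‖ = g / 2 ∧ ‖pst‖ = g / 2 ∧
      Λ.mulVec P (Sum.inl 0) = Real.sqrt s / 2 ∧
      Λ.mulVec Pstar (Sum.inl 0) = Real.sqrt s / 2 := by
  have hip : ∀ x y : EuclideanSpace ℝ (Fin d), ⟪x, y⟫ = ∑ i, x i * y i := fun x y => by
    simp [PiLp.inner_apply, RCLike.inner_apply, conj_trivial, mul_comm]
  have hmcpos : (0:ℝ) < (m * c) ^ 2 := by positivity
  have hp₀pos : 0 < p₀ := hp₀ ▸ Real.sqrt_pos.2 (by positivity)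
  have hp₀spos : 0 < p₀s := hp₀s ▸ Real.sqrt_pos.2 (by positivity)
  have hp₀sq : p₀ ^ 2 = (m * c) ^ 2 + ‖p‖ ^ 2 := by
    rw [hp₀, Real.sq_sqrt (by positivity)]
  have hp₀ssq : p₀s ^ 2 = (m * c) ^ 2 + ‖pstar‖ ^ 2 := by
    rw [hp₀s, Real.sq_sqrt (by positivity)]
  have hEpos : 0 < p₀ + p₀s := by linarith
  have hEne : p₀ + p₀s ≠ 0 := hEpos.ne'
  have hsum : p + pstar = (p₀ + p₀s) • v := by
    rw [hv, smul_smul, mul_inv_cancel₀ hEne, one_smul]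
  have hplt : ‖p‖ < p₀ := by
    apply lt_of_pow_lt_pow_left₀ 2 hp₀pos.le
    rw [hp₀sq]; nlinarith
  have hpslt : ‖pstar‖ < p₀s := by
    apply lt_of_pow_lt_pow_left₀ 2 hp₀spos.le
    rw [hp₀ssq]; nlinarith
  have hspos : 0 < s := by
    rw [hs]
    have htri := norm_add_le p pstar
    nlinarith [norm_nonneg (p + pstar), norm_nonneg p, norm_nonneg pstar]
  set σ := Real.sqrt s with hσdef
  have hσsq : σ ^ 2 = s := Real.sq_sqrt hspos.le
  have hσpos : 0 < σ := Real.sqrt_pos.2 hspos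
  have hρσ : ρ * σ = p₀ + p₀s := by rw [hρ]; field_simp
  have hvpos : 0 < ‖v‖ := norm_pos_iff.2 hvne
  have hWpos : 0 < ‖v‖ ^ 2 := by positivity
  have ha : (p₀ + p₀s) * ⟪v, p⟫ = ‖p‖ ^ 2 + ⟪p, pstar⟫ := by
    have h := congrArg (fun x : EuclideanSpace ℝ (Fin d) => ⟪x, p⟫) hsum
    simp only [inner_add_left, real_inner_smul_left, real_inner_self_eq_norm_sq,
      real_inner_comm p pstar] at h
    linarith
  have ha' : (p₀ + p₀s) * ⟪v, pstar⟫ = ⟪p, pstar⟫ + ‖pstar‖ ^ 2 := by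
    have h := congrArg (fun x : EuclideanSpace ℝ (Fin d) => ⟪x, pstar⟫) hsum
    simp only [inner_add_left, real_inner_smul_left, real_inner_self_eq_norm_sq] at h
    linarith
  have hW : (p₀ + p₀s) ^ 2 * ‖v‖ ^ 2 = ‖p + pstar‖ ^ 2 := by
    have h : ‖(p₀ + p₀s) • v‖ = (p₀ + p₀s) * ‖v‖ := by
      rw [norm_smul, Real.norm_of_nonneg hEpos.le]
    rw [hsum, h]; ring
  have hNval : ‖p + pstar‖ ^ 2 = ‖p‖ ^ 2 + 2 * ⟪p, pstar⟫ + ‖pstar‖ ^ 2 :=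
    norm_add_sq_real p pstar
  have hα1 : (-(ρ * p₀) + (ρ - 1) * ⟪v, p⟫ / ‖v‖ ^ 2) * ‖v‖ ^ 2
      = (ρ - 1) * ⟪v, p⟫ - ρ * p₀ * ‖v‖ ^ 2 := by
    field_simp
    ring
  have hα2 : (-(ρ * p₀s) + (ρ - 1) * ⟪v, pstar⟫ / ‖v‖ ^ 2) * ‖v‖ ^ 2
      = (ρ - 1) * ⟪v, pstar⟫ - ρ * p₀s * ‖v‖ ^ 2 := by
    field_simp
    ring
  obtain ⟨e1, e2, esum, enorm⟩ :=
    aux_scalar p₀ p₀s (‖p‖ ^ 2) (‖pstar‖ ^ 2) (⟪p, pstar⟫) ((m * c) ^ 2)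
      (‖p + pstar‖ ^ 2) s σ ρ (⟪v, p⟫) (⟪v, pstar⟫) (‖v‖ ^ 2)
      (-(ρ * p₀) + (ρ - 1) * ⟪v, p⟫ / ‖v‖ ^ 2)
      (-(ρ * p₀s) + (ρ - 1) * ⟪v, pstar⟫ / ‖v‖ ^ 2)
      hp₀sq hp₀ssq hNval hs hσsq hσpos.ne' hρσ ha ha' hW hWpos.ne' hEne hα1 hα2
  have hfac : ∀ (q : EuclideanSpace ℝ (Fin d)) (c : ℝ),
      ∑ i, c * v i * q i = c * ∑ i, v i * q i := by
    intro q c; rw [Finset.mul_sum]; exact Finset.sum_congr rfl fun i _ => by ring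
  have hcomp : ∀ (q₀ : ℝ) (q : EuclideanSpace ℝ (Fin d)),
      (Λ.mulVec (Sum.elim (fun _ => q₀) (fun i => q i)) (Sum.inl 0)
        = ρ * (q₀ - ⟪v, q⟫)) ∧
      ∀ j, Λ.mulVec (Sum.elim (fun _ => q₀) (fun i => q i)) (Sum.inr j)
        = q j + (-(ρ * q₀) + (ρ - 1) * ⟪v, q⟫ / ‖v‖ ^ 2) * v j := by
    intro q₀ q
    constructor
    · simp only [hΛ, Matrix.mulVec, dotProduct, Fintype.sum_sum_type,
        Matrix.fromBlocks_apply₁₁, Matrix.fromBlocks_apply₁₂, Matrix.of_apply,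
        Sum.elim_inl, Sum.elim_inr, Fin.sum_univ_one]
      rw [hip, hfac q (-ρ)]
      ring
    · intro j
      simp only [hΛ, Matrix.mulVec, dotProduct, Fintype.sum_sum_type,
        Matrix.fromBlocks_apply₂₁, Matrix.fromBlocks_apply₂₂, Matrix.of_apply,
        Sum.elim_inl, Sum.elim_inr, Fin.sum_univ_one]
      have hsplit : ∑ i, ((if j = i then (1:ℝ) else 0)
            + (ρ - 1) * v j * v i / ‖v‖ ^ 2) * q i
          = q j + ((ρ - 1) * v j / ‖v‖ ^ 2) * ∑ i, v i * q i := by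
        simp only [add_mul]
        rw [Finset.sum_add_distrib]
        congr 1
        · simp [ite_mul]
        · rw [Finset.mul_sum]
          exact Finset.sum_congr rfl fun i _ => by ring
      rw [hsplit, hip]
      ring
  have hptval : pt = p + (-(ρ * p₀) + (ρ - 1) * ⟪v, p⟫ / ‖v‖ ^ 2) • v := by
    ext j
    rw [hpt, hP]
    dsimp only
    rw [(hcomp p₀ p).2 j]
    simp only [PiLp.add_apply, PiLp.smul_apply, smul_eq_mul]
  have hpstval : pst = pstar + (-(ρ * p₀s) + (ρ - 1) * ⟪v, pstar⟫ / ‖v‖ ^ 2) • v := by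
    ext j
    rw [hpst, hPstar]
    dsimp only
    rw [(hcomp p₀s pstar).2 j]
    simp only [PiLp.add_apply, PiLp.smul_apply, smul_eq_mul]
  have hzero : pt + pst = 0 := by
    rw [hptval, hpstval]
    have hre : p + (-(ρ * p₀) + (ρ - 1) * ⟪v, p⟫ / ‖v‖ ^ 2) • v
        + (pstar + (-(ρ * p₀s) + (ρ - 1) * ⟪v, pstar⟫ / ‖v‖ ^ 2) • v)
        = (p + pstar) + ((-(ρ * p₀) + (ρ - 1) * ⟪v, p⟫ / ‖v‖ ^ 2)
            + (-(ρ * p₀s) + (ρ - 1) * ⟪v, pstar⟫ / ‖v‖ ^ 2)) • v := by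
      module
    rw [hre, esum, hsum, ← add_smul,
      show p₀ + p₀s + -(p₀ + p₀s) = 0 by ring, zero_smul]
  have hptsq : ‖pt‖ ^ 2 = s / 4 - (m * c) ^ 2 := by
    rw [hptval, norm_add_sq_real]
    rw [real_inner_smul_right, norm_smul, mul_pow, Real.norm_eq_abs, sq_abs,
      real_inner_comm v p]
    linear_combination enorm
  have hptnorm : ‖pt‖ = g / 2 := by
    have hgv : ‖p - pstar‖ ^ 2 - (p₀ - p₀s) ^ 2 = (2 * ‖pt‖) ^ 2 := by
      have hsub : ‖p - pstar‖ ^ 2 = ‖p‖ ^ 2 - 2 * ⟪p, pstar⟫ + ‖pstar‖ ^ 2 :=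
        norm_sub_sq_real p pstar
      linear_combination hsub - hs + hNval - 2 * hp₀sq - 2 * hp₀ssq - 4 * hptsq
    rw [hg, hgv, Real.sqrt_sq (by positivity)]
    ring
  have hpstneg : pst = -pt := by
    have h := hzero
    rw [add_comm] at h
    exact eq_neg_of_add_eq_zero_left h
  refine ⟨hzero, hptnorm, ?_, ?_, ?_⟩
  · rw [hpstneg, norm_neg]; exact hptnorm
  · rw [hP, (hcomp p₀ p).1, e1]
  · rw [hPstar, (hcomp p₀s pstar).1, e2]
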